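/- With P = Wᵀ W + σ² I_q, the matrix (W P⁻¹ Wᵀ) Σ (W P⁻¹ Wᵀ)ᵀ + σ² · W P⁻¹ Wᵀ + σ² I_d equals U Λ″ Uᵀ, where Λ″ is the d×d diagonal matrix whose i-th diagonal entry is (λ_i − σ²)²/λ_i + σ²(λ_i − σ²)/λ_i + σ² for 1 ≤ i ≤ q and σ² for q < i ≤ d. (This is the covariance of P-PCA generative adversarial examples under the posterior-sampling strategy, strategy 2.) -/

import Mathlib

open Matrix

/-- Strategy 2 (posterior sampling) covariance of P-PCA generative adversarial examples:
with `P = Wᵀ W + σ² I_q`,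
`(W P⁻¹ Wᵀ) Σ (W P⁻¹ Wᵀ)ᵀ + σ² (W P⁻¹ Wᵀ) + σ² I_d = U Λ'' Uᵀ` with `Λ''` diagonal with
entries `(λ_i − σ²)²/λ_i + σ²(λ_i − σ²)/λ_i + σ²` for `i ≤ q` and `σ²` otherwise. -/
theorem strategy2_covariance
    (d q : ℕ) (hd : 1 ≤ d) (hq1 : 1 ≤ q) (hqd : q ≤ d)
    (U : Matrix (Fin d) (Fin d) ℝ)
    (hU : U * Uᵀ = 1 ∧ Uᵀ * U = 1)
    (lam : Fin d → ℝ)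
    (hlam_pos : ∀ i, 0 < lam i)
    (hlam_anti : ∀ i j : Fin d, i ≤ j → lam j ≤ lam i)
    (σ2 : ℝ) (hσ2_nonneg : 0 ≤ σ2)
    (hσ2_lt : σ2 < lam ⟨q - 1, by omega⟩)
    (Sig : Matrix (Fin d) (Fin d) ℝ)
    (hSig : Sig = U * diagonal lam * Uᵀ)
    (Uq : Matrix (Fin d) (Fin q) ℝ)
    (hUq : ∀ i j, Uq i j = U i (Fin.castLE hqd j))
    (W : Matrix (Fin d) (Fin q) ℝ)
    (hW : W = Uq * diagonal (fun j : Fin q => Real.sqrt (lam (Fin.castLE hqd j) - σ2)))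
    (P : Matrix (Fin q) (Fin q) ℝ)
    (hP : P = Wᵀ * W + σ2 • (1 : Matrix (Fin q) (Fin q) ℝ)) :
    (W * P⁻¹ * Wᵀ) * Sig * (W * P⁻¹ * Wᵀ)ᵀ + σ2 • (W * P⁻¹ * Wᵀ) +
        σ2 • (1 : Matrix (Fin d) (Fin d) ℝ) =
      U * diagonal (fun i : Fin d =>
        if (i : ℕ) < q then (lam i - σ2) ^ 2 / lam i + σ2 * (lam i - σ2) / lam i + σ2
        else σ2) * Uᵀ := by
  obtain ⟨hU1, hU2⟩ := hU
  set f : Fin d → ℝ := fun i => if (i : ℕ) < q then (lam i - σ2) / lam i else 0 with hf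
  have hle : ∀ i : Fin d, (i : ℕ) < q → σ2 ≤ lam i := by
    intro i hi
    refine le_of_lt (lt_of_lt_of_le hσ2_lt (hlam_anti i ⟨q - 1, by omega⟩ ?_))
    rw [Fin.le_def]; simp; omega
  have hne : ∀ i : Fin d, lam i ≠ 0 := fun i => (hlam_pos i).ne'
  -- orthonormal columns
  have hUqUq : Uqᵀ * Uq = (1 : Matrix (Fin q) (Fin q) ℝ) := by
    ext i j
    have h := congrFun (congrFun hU2 (Fin.castLE hqd i)) (Fin.castLE hqd j)
    rw [mul_apply] at h
    simp only [transpose_apply] at h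
    simp only [mul_apply, transpose_apply, hUq]
    rw [h, one_apply, one_apply]
    simp [Fin.castLE_inj]
  -- P is diagonal lam
  have hP' : P = diagonal (fun j : Fin q => lam (Fin.castLE hqd j)) := by
    rw [hP, hW, transpose_mul, diagonal_transpose, Matrix.mul_assoc, ← Matrix.mul_assoc Uqᵀ,
      hUqUq, one_mul, diagonal_mul_diagonal]
    rw [show σ2 • (1 : Matrix (Fin q) (Fin q) ℝ) = diagonal (fun _ => σ2) by
      ext i j; rcases eq_or_ne i j with h | h <;>
        simp [h, Matrix.one_apply, Matrix.diagonal_apply]]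
    rw [diagonal_add]
    refine congrArg diagonal (funext fun j => ?_)
    have : Real.sqrt (lam (Fin.castLE hqd j) - σ2) * Real.sqrt (lam (Fin.castLE hqd j) - σ2)
        = lam (Fin.castLE hqd j) - σ2 :=
      Real.mul_self_sqrt (by have := hle (Fin.castLE hqd j) j.isLt; linarith)
    rw [this]
    ring
  have hPinv : P⁻¹ = diagonal (fun j : Fin q => (lam (Fin.castLE hqd j))⁻¹) := by
    apply inv_eq_right_inv
    rw [hP', diagonal_mul_diagonal]
    rw [show (fun j : Fin q => lam (Fin.castLE hqd j) * (lam (Fin.castLE hqd j))⁻¹)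
      = fun _ => (1:ℝ) from funext fun j => mul_inv_cancel₀ (hne _), diagonal_one]
  -- key: W P⁻¹ Wᵀ = U diag f Uᵀ
  have hM : W * P⁻¹ * Wᵀ = U * diagonal f * Uᵀ := by
    have hdiag : (diagonal (fun j : Fin q => Real.sqrt (lam (Fin.castLE hqd j) - σ2)) *
        diagonal (fun j : Fin q => (lam (Fin.castLE hqd j))⁻¹) *
        diagonal (fun j : Fin q => Real.sqrt (lam (Fin.castLE hqd j) - σ2)))
        = diagonal (fun j : Fin q =>
            (lam (Fin.castLE hqd j) - σ2) / lam (Fin.castLE hqd j)) := by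
      rw [diagonal_mul_diagonal, diagonal_mul_diagonal]
      refine congrArg diagonal (funext fun j => ?_)
      have hnn : (0:ℝ) ≤ lam (Fin.castLE hqd j) - σ2 := by
        have := hle (Fin.castLE hqd j) j.isLt; linarith
      have h2 := Real.mul_self_sqrt hnn
      rw [mul_right_comm, h2, div_eq_mul_inv]
    rw [hW, hPinv, transpose_mul, diagonal_transpose]
    rw [show Uq * diagonal (fun j : Fin q => Real.sqrt (lam (Fin.castLE hqd j) - σ2)) *
        diagonal (fun j : Fin q => (lam (Fin.castLE hqd j))⁻¹) *
        (diagonal (fun j : Fin q => Real.sqrt (lam (Fin.castLE hqd j) - σ2)) * Uqᵀ)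
      = Uq * (diagonal (fun j : Fin q => Real.sqrt (lam (Fin.castLE hqd j) - σ2)) *
        diagonal (fun j : Fin q => (lam (Fin.castLE hqd j))⁻¹) *
        diagonal (fun j : Fin q => Real.sqrt (lam (Fin.castLE hqd j) - σ2))) * Uqᵀ by
      simp only [Matrix.mul_assoc], hdiag]
    ext i j
    rw [mul_apply, mul_apply]
    simp only [mul_diagonal, transpose_apply, hUq]
    rw [← Finset.sum_subset (Finset.subset_univ
      ((Finset.univ : Finset (Fin q)).map ⟨Fin.castLE hqd, Fin.castLE_injective hqd⟩))]
    · rw [Finset.sum_map]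
      apply Finset.sum_congr rfl
      intro k _
      simp [hf, k.isLt]
    · intro k _ hk
      have : ¬ (k : ℕ) < q := by
        intro hlt
        exact hk (Finset.mem_map.mpr ⟨⟨(k:ℕ), hlt⟩, Finset.mem_univ _, by ext; simp⟩)
      simp [hf, this]
  -- conjugation product lemma
  have hprod : ∀ v w : Fin d → ℝ,
      (U * diagonal v * Uᵀ) * (U * diagonal w * Uᵀ) = U * diagonal (fun i => v i * w i) * Uᵀ := by
    intro v w
    calc (U * diagonal v * Uᵀ) * (U * diagonal w * Uᵀ)
        = U * diagonal v * (Uᵀ * U) * diagonal w * Uᵀ := by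
          simp only [mul_assoc]
      _ = U * diagonal (fun i => v i * w i) * Uᵀ := by
          rw [hU2, mul_one, Matrix.mul_assoc U, diagonal_mul_diagonal]
  have hMt : (U * diagonal f * Uᵀ)ᵀ = U * diagonal f * Uᵀ := by
    rw [transpose_mul, transpose_mul, transpose_transpose, diagonal_transpose, mul_assoc]
  rw [hM, hSig, hMt, hprod, hprod]
  rw [show σ2 • (U * diagonal f * Uᵀ) = U * (σ2 • diagonal f) * Uᵀ by
    rw [Matrix.mul_smul, Matrix.smul_mul]]
  rw [show σ2 • (1 : Matrix (Fin d) (Fin d) ℝ) = U * (σ2 • (1 : Matrix (Fin d) (Fin d) ℝ)) * Uᵀ by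
    rw [Matrix.mul_smul, Matrix.smul_mul, mul_one, hU1]]
  rw [← Matrix.add_mul, ← Matrix.add_mul, ← Matrix.mul_add, ← Matrix.mul_add]
  congr 2
  rw [← diagonal_smul, show σ2 • (1 : Matrix (Fin d) (Fin d) ℝ) = diagonal (fun _ => σ2) by
    ext i j; rcases eq_or_ne i j with h | h <;>
      simp [h, Matrix.one_apply, Matrix.diagonal_apply], diagonal_add,
    diagonal_add]
  refine congrArg diagonal (funext fun i => ?_)
  by_cases hi : (i : ℕ) < q
  · simp only [hf, hi, if_true, Pi.add_apply, Pi.smul_apply, smul_eq_mul]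
    field_simp [hne i]
  · simp [hf, hi]
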